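/- Let f : ℝ → ℝ be continuous, strictly increasing, and bounded, and let X_n and Y_n be sequences of real random variables with X_n ↔_f Y_n. Suppose there is a constant M such that |X_n| ≤ M and |Y_n| ≤ M almost surely for all n. Then |X_n − Y_n| → 0 in probability. -/

import Mathlib

open MeasureTheory Filter Topology

/-- `X` f-converges to `Y`: `d_f(X_n, Y_n) = |f (X_n) - f (Y_n)| → 0` in probability. -/
def FConvergesTo (f : ℝ → ℝ) {Ω : Type*} [MeasurableSpace Ω] (μ : Measure Ω)
    (X Y : ℕ → Ω → ℝ) : Prop :=
  ∀ δ : ℝ, 0 < δ →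
    Tendsto (fun n => μ {ω | δ < |f (X n ω) - f (Y n ω)|}) atTop (𝓝 0)

/-- **f-convergence implies ordinary convergence for bounded sequences.** If `f` is
continuous, strictly increasing and bounded, `X_n ↔_f Y_n`, and `|X_n|, |Y_n| ≤ M` a.s.,
then `|X_n − Y_n| → 0` in probability. -/
theorem fconv_to_ordinary_convergence_of_bounded
    (f : ℝ → ℝ) (hf_cont : Continuous f) (hf_mono : StrictMono f)
    (hf_bdd : ∃ K : ℝ, ∀ x, |f x| ≤ K)
    {Ω : Type*} [MeasurableSpace Ω] (μ : Measure Ω) [IsProbabilityMeasure μ]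
    (X Y : ℕ → Ω → ℝ) (hXY : FConvergesTo f μ X Y)
    (M : ℝ) (hX : ∀ n, ∀ᵐ ω ∂μ, |X n ω| ≤ M) (hY : ∀ n, ∀ᵐ ω ∂μ, |Y n ω| ≤ M) :
    ∀ δ : ℝ, 0 < δ →
      Tendsto (fun n => μ {ω | δ < |X n ω - Y n ω|}) atTop (𝓝 0) := by
  intro δ hδ
  set M' := max M 0 with hM'
  have hMM' : M ≤ M' := le_max_left _ _
  -- minimum of g t = f (t+δ) - f t on [-M', M']
  have hcomp : IsCompact (Set.Icc (-M') M') := isCompact_Icc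
  have hne : (Set.Icc (-M') M').Nonempty := by
    refine ⟨0, ?_, le_max_right _ _⟩
    simp [hM']
  have hgc : ContinuousOn (fun t => f (t + δ) - f t) (Set.Icc (-M') M') :=
    ((hf_cont.comp (continuous_add_right δ)).sub hf_cont).continuousOn
  obtain ⟨t₀, ht₀, hmin⟩ := hcomp.exists_isMinOn hne hgc
  set ε := f (t₀ + δ) - f t₀ with hε
  have hεpos : 0 < ε := sub_pos.mpr (hf_mono (by linarith))
  -- key pointwise fact
  have key : ∀ x y : ℝ, |x| ≤ M' → |y| ≤ M' → δ < |x - y| → ε ≤ |f x - f y| := by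
    have main : ∀ x y : ℝ, |y| ≤ M' → y + δ < x → ε ≤ f x - f y := by
      intro x y hy hlt
      have hyI : y ∈ Set.Icc (-M') M' := abs_le.mp hy
      have := hmin hyI
      have h2 : f (y + δ) < f x := hf_mono hlt
      simp only [Set.mem_setOf_eq] at this
      linarith
    intro x y hx hy h
    have hne' : x ≠ y := by
      intro hxy
      rw [hxy, sub_self, abs_zero] at h
      linarith
    rcases lt_or_gt_of_ne hne' with hlt | hgt
    · -- x < y
      have : δ < y - x := by
        have := abs_sub_comm x y ▸ h
        rcases abs_cases (y - x) with ⟨he, _⟩ | ⟨_, hneg⟩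
        · rw [abs_sub_comm] at h; linarith [he ▸ h]
        · linarith
      have h1 : ε ≤ f y - f x := main y x (le_trans (abs_le.mpr ⟨(abs_le.mp hx).1, (abs_le.mp hx).2⟩) le_rfl) (by linarith)
      have : f x < f y := hf_mono hlt
      rw [abs_sub_comm, abs_of_pos (by linarith)]
      linarith
    · -- y < x
      have : δ < x - y := by
        rcases abs_cases (x - y) with ⟨he, _⟩ | ⟨_, hneg⟩
        · linarith [he ▸ h]
        · linarith
      have h1 : ε ≤ f x - f y := main x y hy (by linarith)
      have : f y < f x := hf_mono hgt
      rw [abs_of_pos (by linarith)]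
      linarith
  -- squeeze
  have hle : ∀ n, μ {ω | δ < |X n ω - Y n ω|} ≤ μ {ω | ε / 2 < |f (X n ω) - f (Y n ω)|} := by
    intro n
    refine measure_mono_ae ?_
    filter_upwards [hX n, hY n] with ω hx hy hω
    have : ε ≤ |f (X n ω) - f (Y n ω)| :=
      key _ _ (hx.trans hMM') (hy.trans hMM') hω
    exact lt_of_lt_of_le (by linarith) this
  have h0 := hXY (ε / 2) (by linarith)
  exact tendsto_of_tendsto_of_tendsto_of_le_of_le tendsto_const_nhds h0
    (fun n => zero_le) hle
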